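/- Adversarial failure of k-means under imbalance: consider a 1D configuration with n₁ points at 0 and n₂/2 points each at Δ−D and Δ+D (n₂ even, Δ > D > 0). The cost of the correct 2-clustering with centers at 0 and Δ is n₂·D², and the cost of the splitting solution with centers at Δ−D and Δ+D is n₁·(Δ−D)². Hence if n₁·(Δ−D)² < n₂·D², equivalently Δ/D < 1 + √(n₂/n₁), the splitting solution has strictly smaller k-means cost than the correct solution. -/

import Mathlib

/-- 1D `k`-means cost (k = 2) of the adversarial configuration:
`n₁` points at `0`, `n₂/2` points each at `Δ−D` and `Δ+D`. -/
noncomputable def kmCost (n₁ n₂ : ℕ) (Δ D θ₁ θ₂ : ℝ) : ℝ :=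
  (n₁ : ℝ) * min ((0 - θ₁) ^ 2) ((0 - θ₂) ^ 2) +
  (n₂ : ℝ) / 2 * min ((Δ - D - θ₁) ^ 2) ((Δ - D - θ₂) ^ 2) +
  (n₂ : ℝ) / 2 * min ((Δ + D - θ₁) ^ 2) ((Δ + D - θ₂) ^ 2)

theorem kmeans_imbalance_failure (n₁ n₂ : ℕ) (Δ D : ℝ)
    (hn1 : 0 < n₁) (hn2 : 0 < n₂) (heven : Even n₂)
    (hD : 0 < D) (hΔD : D < Δ) (hsep : D < Δ - D) :
    kmCost n₁ n₂ Δ D 0 Δ = (n₂ : ℝ) * D ^ 2 ∧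
    kmCost n₁ n₂ Δ D (Δ - D) (Δ + D) = (n₁ : ℝ) * (Δ - D) ^ 2 ∧
    ((n₁ : ℝ) * (Δ - D) ^ 2 < (n₂ : ℝ) * D ^ 2 ↔
        Δ / D < 1 + Real.sqrt ((n₂ : ℝ) / (n₁ : ℝ))) ∧
    ((n₁ : ℝ) * (Δ - D) ^ 2 < (n₂ : ℝ) * D ^ 2 →
        kmCost n₁ n₂ Δ D (Δ - D) (Δ + D) < kmCost n₁ n₂ Δ D 0 Δ) := by
  have hn1' : (0 : ℝ) < n₁ := by exact_mod_cast hn1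
  have h1 : kmCost n₁ n₂ Δ D 0 Δ = (n₂ : ℝ) * D ^ 2 := by
    unfold kmCost
    rw [min_eq_left (by nlinarith), min_eq_right (by nlinarith),
        min_eq_right (by nlinarith)]
    ring
  have h2 : kmCost n₁ n₂ Δ D (Δ - D) (Δ + D) = (n₁ : ℝ) * (Δ - D) ^ 2 := by
    unfold kmCost
    rw [min_eq_left (by nlinarith), min_eq_left (by nlinarith),
        min_eq_right (by nlinarith)]
    ring
  have hiff : (n₁ : ℝ) * (Δ - D) ^ 2 < (n₂ : ℝ) * D ^ 2 ↔
      Δ / D < 1 + Real.sqrt ((n₂ : ℝ) / (n₁ : ℝ)) := by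
    have hx : (0 : ℝ) ≤ (Δ - D) / D := div_nonneg (by linarith) hD.le
    have key : (Δ - D) / D < Real.sqrt ((n₂ : ℝ) / (n₁ : ℝ)) ↔
        ((Δ - D) / D) ^ 2 < (n₂ : ℝ) / (n₁ : ℝ) := Real.lt_sqrt hx
    constructor
    · intro h
      have h2' : ((Δ - D) / D) ^ 2 < (n₂ : ℝ) / (n₁ : ℝ) := by
        rw [div_pow, div_lt_div_iff₀ (by positivity) hn1']
        nlinarith
      have := key.mpr h2'
      have : Δ / D < 1 + Real.sqrt ((n₂ : ℝ) / (n₁ : ℝ)) := by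
        have hΔ : Δ / D = 1 + (Δ - D) / D := by field_simp; ring
        rw [hΔ]; linarith
      exact this
    · intro h
      have hlt : (Δ - D) / D < Real.sqrt ((n₂ : ℝ) / (n₁ : ℝ)) := by
        have hΔ : Δ / D = 1 + (Δ - D) / D := by field_simp; ring
        rw [hΔ] at h; linarith
      have h2' := key.mp hlt
      rw [div_pow, div_lt_div_iff₀ (by positivity) hn1'] at h2'
      nlinarith
  exact ⟨h1, h2, hiff, fun h => by rw [h1, h2]; exact h⟩
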